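/- The number of staircase polygons of half-perimeter n+1 equals the n-th Catalan number C_n = C(2n,n)/(n+1), for all n ≥ 1. Equivalently, the formal power series S(t) = (1 - 2t - sqrt(1-4t))/2 has coefficient of t^{n+1} equal to C_n. -/

import Mathlib

open PowerSeries in
/-- The number of staircase polygons of half-perimeter `n+1` equals the `n`-th
Catalan number, for all `n ≥ 1`: the unique formal power series `S` with zero
constant term satisfying `S = S² + 2tS + t²` (the half-perimeter generating
function of staircase polygons, `S(t) = (1 - 2t - √(1-4t))/2`) has
`[t^{n+1}] S = Catalan(n)`. -/
theorem staircase_halfperimeter_catalan (S : PowerSeries ℚ)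
    (h0 : PowerSeries.constantCoeff S = 0)
    (heq : S = S ^ 2 + 2 * X * S + X ^ 2) :
    ∀ n : ℕ, 1 ≤ n → PowerSeries.coeff (n + 1) S = catalan n := by
  set C : PowerSeries ℚ := S + X with hC
  have hCeq : C = X + C ^ 2 := by
    rw [hC]; conv_lhs => rw [heq]
    ring
  have hC0 : PowerSeries.constantCoeff C = 0 := by
    simp [hC, h0]
  have hz0 : PowerSeries.coeff 0 C = 0 := by
    simpa [PowerSeries.coeff_zero_eq_constantCoeff] using hC0
  have key : ∀ n : ℕ, PowerSeries.coeff (n + 1) C = catalan n := by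
    intro n
    induction n using Nat.strong_induction_on with
    | _ n ih =>
      match n with
      | 0 =>
        rw [hCeq]
        simp only [map_add, PowerSeries.coeff_one_X, sq, PowerSeries.coeff_mul]
        rw [Finset.Nat.sum_antidiagonal_eq_sum_range_succ_mk]
        simp [Finset.sum_range_succ, hz0]
      | Nat.succ m =>
        rw [hCeq]
        simp only [Nat.succ_eq_add_one, map_add, sq, PowerSeries.coeff_mul]
        have hX : PowerSeries.coeff (m + 1 + 1) (X : PowerSeries ℚ) = 0 := by
          rw [PowerSeries.coeff_X]; simp
        rw [hX, zero_add, Finset.Nat.sum_antidiagonal_eq_sum_range_succ_mk]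
        rw [Finset.sum_range_succ, Finset.sum_range_succ']
        have hzlast : PowerSeries.coeff (m + 1 + 1 - (m + 1 + 1)) C = 0 := by
          simpa using hz0
        rw [hzlast, mul_zero, add_zero, hz0, zero_mul, add_zero]
        have hstep : ∀ i ∈ Finset.range (m + 1),
            PowerSeries.coeff (i + 1) C * PowerSeries.coeff (m + 1 + 1 - (i + 1)) C
              = (catalan i : ℚ) * (catalan (m - i) : ℚ) := by
          intro i hi
          rw [Finset.mem_range] at hi
          have h2 : m + 1 + 1 - (i + 1) = (m - i) + 1 := by omega
          rw [h2, ih i (by omega), ih (m - i) (by omega)]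
        rw [Finset.sum_congr rfl hstep]
        rw [catalan_succ]
        push_cast
        rw [Finset.sum_range fun i => (catalan i : ℚ) * (catalan (m - i) : ℚ)]
  intro n hn
  have hs : PowerSeries.coeff (n + 1) S
      = PowerSeries.coeff (n + 1) C - PowerSeries.coeff (n + 1) (X : PowerSeries ℚ) := by
    simp [hC]
  rw [hs, key n, PowerSeries.coeff_X]
  have : n + 1 ≠ 1 := by omega
  simp [this, show n ≠ 0 by omega]
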